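/- Let d ∈ (0,1) and define the Henrick mapping g_d(ω) = ω·(d + d² − 3dω + ω²)/(d² + ω(1 − 2d)). Then: (i) the denominator d² + ω(1 − 2d) is strictly positive for every ω ∈ [0,1]; (ii) g_d(0) = 0 and g_d(1) = 1; (iii) 0 ≤ g_d(ω) ≤ 1 for every ω ∈ [0,1]; (iv) g_d is monotone non-decreasing on [0,1]; (v) g_d(d) = d, g_d'(d) = 0 and g_d''(d) = 0. -/

import Mathlib

/-- The Henrick–Aslam–Powers mapping function of the WENO-M scheme. -/
noncomputable def henrick (d ω : ℝ) : ℝ :=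
  ω * (d + d ^ 2 - 3 * d * ω + ω ^ 2) / (d ^ 2 + ω * (1 - 2 * d))

lemma henrick_hasDerivAt (d ω : ℝ) (hD : d ^ 2 + ω * (1 - 2 * d) ≠ 0) :
    HasDerivAt (henrick d)
      ((ω - d) ^ 2 * ((3 * (d ^ 2 + ω * (1 - 2 * d)) - (ω - d) * (1 - 2 * d))
        / (d ^ 2 + ω * (1 - 2 * d)) ^ 2)) ω := by
  have hN : HasDerivAt (fun ω : ℝ => ω * (d + d ^ 2 - 3 * d * ω + ω ^ 2))
      (d + d ^ 2 - 6 * d * ω + 3 * ω ^ 2) ω := by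
    have h := (hasDerivAt_id ω).mul (((hasDerivAt_const ω (d + d ^ 2)).sub
        ((hasDerivAt_const ω (3 * d)).mul (hasDerivAt_id ω))).add (hasDerivAt_pow 2 ω))
    refine h.congr_deriv ?_; simp; ring
  have hDd : HasDerivAt (fun ω : ℝ => d ^ 2 + ω * (1 - 2 * d)) (1 - 2 * d) ω := by
    have h := (hasDerivAt_const ω (d ^ 2)).add
      ((hasDerivAt_id ω).mul (hasDerivAt_const ω (1 - 2 * d)))
    refine h.congr_deriv ?_; simp
  have h := hN.div hDd hD
  refine h.congr_deriv ?_
  field_simp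
  ring

/-- Basic properties of the Henrick mapping `g_d` for `d ∈ (0,1)`:
positive denominator on `[0,1]`, fixed endpoints, range in `[0,1]`, monotonicity,
and `g_d(d) = d`, `g_d'(d) = g_d''(d) = 0`. -/
theorem henrick_mapping_properties (d : ℝ) (hd : d ∈ Set.Ioo (0 : ℝ) 1) :
    (∀ ω ∈ Set.Icc (0 : ℝ) 1, 0 < d ^ 2 + ω * (1 - 2 * d)) ∧
    henrick d 0 = 0 ∧
    henrick d 1 = 1 ∧
    (∀ ω ∈ Set.Icc (0 : ℝ) 1, henrick d ω ∈ Set.Icc (0 : ℝ) 1) ∧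
    MonotoneOn (henrick d) (Set.Icc (0 : ℝ) 1) ∧
    henrick d d = d ∧
    deriv (henrick d) d = 0 ∧
    deriv (deriv (henrick d)) d = 0 := by
  obtain ⟨hd0, hd1⟩ := hd
  have hpos : ∀ ω ∈ Set.Icc (0 : ℝ) 1, 0 < d ^ 2 + ω * (1 - 2 * d) := by
    rintro ω ⟨h0, h1⟩
    rcases le_or_gt 0 (1 - 2 * d) with h | h
    · nlinarith [mul_nonneg h0 h]
    · nlinarith
  have h0 : henrick d 0 = 0 := by simp [henrick]
  have hne1 : d ^ 2 + (1 : ℝ) * (1 - 2 * d) ≠ 0 :=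
    (hpos 1 ⟨zero_le_one, le_refl 1⟩).ne'
  have h1 : henrick d 1 = 1 := by
    rw [henrick, div_eq_one_iff_eq hne1]; ring
  have hdd : d ∈ Set.Icc (0 : ℝ) 1 := ⟨hd0.le, hd1.le⟩
  have hDd := hpos d hdd
  have hfix : henrick d d = d := by
    rw [henrick, div_eq_iff hDd.ne']; ring
  have hmono : MonotoneOn (henrick d) (Set.Icc (0 : ℝ) 1) := by
    apply monotoneOn_of_deriv_nonneg (convex_Icc 0 1)
    · apply ContinuousOn.div (by fun_prop) (by fun_prop)
      intro ω hω; exact (hpos ω hω).ne'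
    · intro ω hω
      rw [interior_Icc] at hω
      exact (henrick_hasDerivAt d ω (hpos ω (Set.mem_Icc_of_Ioo hω)).ne').differentiableAt.differentiableWithinAt
    · intro ω hω
      rw [interior_Icc] at hω
      obtain ⟨hω0, hω1⟩ := hω
      rw [(henrick_hasDerivAt d ω (hpos ω ⟨hω0.le, hω1.le⟩).ne').deriv]
      apply mul_nonneg (sq_nonneg _)
      apply div_nonneg _ (sq_nonneg _)
      nlinarith [mul_nonneg (by linarith : (0:ℝ) ≤ 1 - ω) (by nlinarith : (0:ℝ) ≤ d * (d + 1)),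
        mul_nonneg hω0.le (by nlinarith : (0:ℝ) ≤ (1 - d) * (2 - d))]
  have hrange : ∀ ω ∈ Set.Icc (0 : ℝ) 1, henrick d ω ∈ Set.Icc (0 : ℝ) 1 := by
    intro ω hω
    constructor
    · have := hmono ⟨le_refl 0, zero_le_one⟩ hω hω.1
      rwa [h0] at this
    · have := hmono hω ⟨zero_le_one, le_refl 1⟩ hω.2
      rwa [h1] at this
  have hderiv1 : deriv (henrick d) d = 0 := by
    rw [(henrick_hasDerivAt d d hDd.ne').deriv]; simp
  have heq : deriv (henrick d) =ᶠ[nhds d]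
      fun ω => (ω - d) ^ 2 * ((3 * (d ^ 2 + ω * (1 - 2 * d)) - (ω - d) * (1 - 2 * d))
        / (d ^ 2 + ω * (1 - 2 * d)) ^ 2) := by
    have hc : ContinuousAt (fun ω : ℝ => d ^ 2 + ω * (1 - 2 * d)) d := by fun_prop
    filter_upwards [hc.eventually_ne hDd.ne'] with ω hω
    exact (henrick_hasDerivAt d ω hω).deriv
  have hderiv2 : deriv (deriv (henrick d)) d = 0 := by
    rw [heq.deriv_eq]
    have hsq : HasDerivAt (fun ω : ℝ => (ω - d) ^ 2) 0 d := by
      have h := ((hasDerivAt_id d).sub_const d).pow 2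
      refine h.congr_deriv ?_; simp
    have hr : DifferentiableAt ℝ
        (fun ω : ℝ => (3 * (d ^ 2 + ω * (1 - 2 * d)) - (ω - d) * (1 - 2 * d))
          / (d ^ 2 + ω * (1 - 2 * d)) ^ 2) d := by
      apply DifferentiableAt.div (by fun_prop) (by fun_prop)
      exact pow_ne_zero 2 hDd.ne'
    exact (hsq.mul hr.hasDerivAt).deriv.trans (by simp)
  exact ⟨hpos, h0, h1, hrange, hmono, hfix, hderiv1, hderiv2⟩
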